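/- For every x > 0, 0 < x²(log x − Ψ(x) − 1/(2x)) ≤ 1/12, where Ψ is the digamma function. -/

import Mathlib

open Real Set Filter Topology

set_option maxHeartbeats 1000000

noncomputable def G1 (t : ℝ) : ℝ := (2*t)⁻¹ + (2*(t+1))⁻¹ - (log (t+1) - log t)
noncomputable def G2 (t : ℝ) : ℝ := ((t^2)⁻¹ - ((t+1)^2)⁻¹)/12 - G1 t

lemma hasDerivAt_G1 {t : ℝ} (ht : 0 < t) :
    HasDerivAt G1 (-(1/(2*t^2*(t+1)^2))) t := by
  have h0 : (0:ℝ) < t + 1 := by linarith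
  have h1 : HasDerivAt (fun t : ℝ => (2*t)⁻¹) (-2/(2*t)^2) t := by
    simpa [Pi.inv_def] using ((hasDerivAt_id t).const_mul 2).inv (by positivity)
  have h2 : HasDerivAt (fun t : ℝ => (2*(t+1))⁻¹) (-2/(2*(t+1))^2) t := by
    simpa [Pi.inv_def] using (((hasDerivAt_id t).add_const 1).const_mul 2).inv (by positivity)
  have h3 : HasDerivAt (fun t : ℝ => log (t+1)) (1/(t+1)) t := by
    simpa using ((hasDerivAt_id t).add_const 1).log h0.ne'
  have h4 : HasDerivAt (fun t : ℝ => log t) (1/t) t := by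
    simpa using (hasDerivAt_id t).log ht.ne'
  refine ((h1.add h2).sub (h3.sub h4)).congr_deriv ?_
  field_simp
  ring

lemma hasDerivAt_G2 {t : ℝ} (ht : 0 < t) :
    HasDerivAt G2 (-(1/(6*t^3*(t+1)^3))) t := by
  have h0 : (0:ℝ) < t + 1 := by linarith
  have h1 : HasDerivAt (fun t : ℝ => (t^2)⁻¹) (-(2*t)/(t^2)^2) t := by
    simpa [Pi.inv_def] using (hasDerivAt_pow 2 t).inv (by positivity)
  have h2 : HasDerivAt (fun t : ℝ => ((t+1)^2)⁻¹) (-(2*(t+1))/((t+1)^2)^2) t := by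
    have := (((hasDerivAt_id t).add_const 1).pow 2).inv (pow_ne_zero 2 h0.ne')
    simpa [Pi.inv_def, Pi.pow_def] using this
  refine (((h1.sub h2).div_const 12).sub (hasDerivAt_G1 ht)).congr_deriv ?_
  field_simp
  ring

lemma pos_of_strictAntiOn {g : ℝ → ℝ} (hg : StrictAntiOn g (Ioi 0))
    (h0 : Tendsto g atTop (nhds 0)) {t : ℝ} (ht : 0 < t) : 0 < g t := by
  have h1 : 0 ≤ g (t+1) := by
    refine le_of_tendsto h0 ?_
    filter_upwards [eventually_gt_atTop (t+1)] with s hs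
    exact (hg (mem_Ioi.mpr (by linarith)) (mem_Ioi.mpr (by linarith)) hs).le
  exact h1.trans_lt (hg (mem_Ioi.mpr ht) (mem_Ioi.mpr (by linarith)) (lt_add_one t))

lemma tendsto_log_succ_sub : Tendsto (fun t : ℝ => log (t+1) - log t) atTop (nhds 0) := by
  have h1 : Tendsto (fun t : ℝ => 1 + t⁻¹) atTop (nhds 1) := by
    simpa using tendsto_inv_atTop_zero.const_add (1:ℝ)
  have h2 : Tendsto (fun t : ℝ => log (1 + t⁻¹)) atTop (nhds 0) := by
    simpa [Function.comp_def] using ((Real.continuousAt_log one_ne_zero).tendsto.comp h1)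
  refine h2.congr' ?_
  filter_upwards [eventually_gt_atTop (0:ℝ)] with t ht
  rw [← log_div (by positivity) ht.ne']
  congr 1
  field_simp

lemma tendsto_G1 : Tendsto G1 atTop (nhds 0) := by
  have h1 : Tendsto (fun t : ℝ => (2*t)⁻¹) atTop (nhds 0) :=
    tendsto_inv_atTop_zero.comp (tendsto_id.const_mul_atTop two_pos)
  have h2 : Tendsto (fun t : ℝ => (2*(t+1))⁻¹) atTop (nhds 0) :=
    tendsto_inv_atTop_zero.comp ((tendsto_atTop_add_const_right _ 1 tendsto_id).const_mul_atTop two_pos)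
  unfold G1
  simpa using (h1.add h2).sub tendsto_log_succ_sub

lemma tendsto_G2 : Tendsto G2 atTop (nhds 0) := by
  have h1 : Tendsto (fun t : ℝ => (t^2)⁻¹) atTop (nhds 0) :=
    tendsto_inv_atTop_zero.comp (tendsto_pow_atTop two_ne_zero)
  have h2 : Tendsto (fun t : ℝ => ((t+1)^2)⁻¹) atTop (nhds 0) :=
    tendsto_inv_atTop_zero.comp ((tendsto_pow_atTop two_ne_zero).comp (tendsto_atTop_add_const_right _ 1 tendsto_id))
  unfold G2
  simpa using ((h1.sub h2).div_const 12).sub tendsto_G1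

lemma G1_pos {t : ℝ} (ht : 0 < t) : 0 < G1 t := by
  refine pos_of_strictAntiOn ?_ tendsto_G1 ht
  refine strictAntiOn_of_deriv_neg (convex_Ioi 0) ?_ ?_
  · exact fun s hs => (hasDerivAt_G1 hs).continuousAt.continuousWithinAt
  · intro s hs
    rw [interior_Ioi] at hs
    have hs' : (0:ℝ) < s := hs
    rw [(hasDerivAt_G1 hs').deriv, neg_lt_zero]
    positivity

lemma G2_pos {t : ℝ} (ht : 0 < t) : 0 < G2 t := by
  refine pos_of_strictAntiOn ?_ tendsto_G2 ht
  refine strictAntiOn_of_deriv_neg (convex_Ioi 0) ?_ ?_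
  · exact fun s hs => (hasDerivAt_G2 hs).continuousAt.continuousWithinAt
  · intro s hs
    rw [interior_Ioi] at hs
    have hs' : (0:ℝ) < s := hs
    rw [(hasDerivAt_G2 hs').deriv, neg_lt_zero]
    positivity

/-- The digamma function `Ψ = Γ'/Γ`, as the derivative of `log ∘ Γ`. -/
noncomputable def digamma (x : ℝ) : ℝ := deriv (fun y => log (Gamma y)) x

lemma logGamma_diff {x : ℝ} (hx : 0 < x) : DifferentiableAt ℝ (fun y => log (Gamma y)) x := by
  refine (Real.differentiableAt_Gamma fun m => ?_).log (Gamma_pos_of_pos hx).ne'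
  have : (0:ℝ) ≤ m := m.cast_nonneg
  exact ne_of_gt (by linarith)

lemma hasDerivAt_digamma {x : ℝ} (hx : 0 < x) :
    HasDerivAt (fun y => log (Gamma y)) (digamma x) x := by
  unfold digamma
  exact (logGamma_diff hx).hasDerivAt

lemma digamma_add_one {x : ℝ} (hx : 0 < x) : digamma (x+1) = digamma x + 1/x := by
  have key : HasDerivAt (fun y => log (Gamma (y+1))) (digamma x + 1/x) x := by
    have h1 : HasDerivAt (fun y => log (Gamma y) + log y) (digamma x + 1/x) x := by
      have := (hasDerivAt_digamma hx).add ((hasDerivAt_id x).log hx.ne')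
      simpa [Pi.add_def] using this
    refine HasDerivAt.congr_of_eventuallyEq h1 ?_
    filter_upwards [eventually_gt_nhds hx] with y hy
    rw [Gamma_add_one hy.ne', log_mul hy.ne' (Gamma_pos_of_pos hy).ne', add_comm]
  have key2 : HasDerivAt (fun y => log (Gamma (y+1))) (digamma (x+1)) x :=
    (hasDerivAt_digamma (by linarith : (0:ℝ) < x+1)).comp_add_const
  exact key2.unique key

lemma digamma_le_log {x : ℝ} (hx : 0 < x) : digamma x ≤ log x := by
  have hd : DifferentiableAt ℝ (log ∘ Gamma) x := logGamma_diff hx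
  have h := convexOn_log_Gamma.deriv_le_slope (mem_Ioi.mpr hx)
    (mem_Ioi.mpr (by linarith : (0:ℝ) < x+1)) (lt_add_one x) hd
  rw [slope_def_field] at h
  have he : (log ∘ Gamma) (x+1) = log x + (log ∘ Gamma) x := by
    simp only [Function.comp_apply, Gamma_add_one hx.ne',
      log_mul hx.ne' (Gamma_pos_of_pos hx).ne']
  calc digamma x = deriv (log ∘ Gamma) x := rfl
    _ ≤ _ := h
    _ = log x := by rw [he]; field_simp; ring

lemma log_le_digamma_add_one {x : ℝ} (hx : 0 < x) : log x ≤ digamma (x+1) := by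
  have hd : DifferentiableAt ℝ (log ∘ Gamma) (x+1) := logGamma_diff (by linarith)
  have h := convexOn_log_Gamma.slope_le_deriv (mem_Ioi.mpr hx)
    (mem_Ioi.mpr (by linarith : (0:ℝ) < x+1)) (lt_add_one x) hd
  rw [slope_def_field] at h
  have he : (log ∘ Gamma) (x+1) = log x + (log ∘ Gamma) x := by
    simp only [Function.comp_apply, Gamma_add_one hx.ne',
      log_mul hx.ne' (Gamma_pos_of_pos hx).ne']
  calc log x = ((log ∘ Gamma) (x+1) - (log ∘ Gamma) x) / (x + 1 - x) := by rw [he]; field_simp; ring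
    _ ≤ deriv (log ∘ Gamma) (x+1) := h
    _ = digamma (x+1) := rfl

noncomputable def F (y : ℝ) : ℝ := log y - digamma y - 1/(2*y)

lemma F_rec {y : ℝ} (hy : 0 < y) : F y = G1 y + F (y+1) := by
  unfold F G1
  rw [digamma_add_one hy]
  have h1 : y ≠ 0 := hy.ne'
  have h2 : y + 1 ≠ 0 := by positivity
  field_simp
  ring

lemma tendsto_F : Tendsto F atTop (nhds 0) := by
  have hlow : Tendsto (fun y : ℝ => -(1/(2*y))) atTop (nhds 0) := by
    simpa using (tendsto_inv_atTop_zero.comp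
      (tendsto_id.const_mul_atTop (two_pos : (0:ℝ) < 2))).neg
  have hup : Tendsto (fun y : ℝ => log y - log (y-1)) atTop (nhds 0) := by
    have := tendsto_log_succ_sub.comp (tendsto_atTop_add_const_right atTop (-1) tendsto_id)
    refine this.congr fun y => ?_
    simp [Function.comp]
    ring_nf
  refine tendsto_of_tendsto_of_tendsto_of_le_of_le' hlow hup ?_ ?_
  · filter_upwards [eventually_gt_atTop (1:ℝ)] with y hy
    have := digamma_le_log (by linarith : (0:ℝ) < y)
    unfold F; linarith
  · filter_upwards [eventually_gt_atTop (1:ℝ)] with y hy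
    have h := log_le_digamma_add_one (by linarith : (0:ℝ) < y - 1)
    rw [sub_add_cancel] at h
    have : 0 < 1/(2*y) := by positivity
    unfold F; linarith

lemma F_le {x : ℝ} (hx : 0 < x) (n : ℕ) :
    F x ≤ (1/12)*((x^2)⁻¹ - ((x+n)^2)⁻¹) + F (x+n) := by
  induction n with
  | zero => simp
  | succ n ih =>
    have hxn : (0:ℝ) < x + n := by positivity
    have h1 : F (x+n) = G1 (x+n) + F (x+n+1) := F_rec hxn
    have h2 : G1 (x+n) ≤ (((x+n)^2)⁻¹ - ((x+n+1)^2)⁻¹)/12 := by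
      have := G2_pos hxn
      unfold G2 at this
      linarith
    push_cast
    have he : x + (n+1) = x + n + 1 := by ring
    rw [he]
    linarith

lemma F_ge {x : ℝ} (hx : 0 < x) (n : ℕ) : F (x+n) ≤ F x := by
  induction n with
  | zero => simp
  | succ n ih =>
    have hxn : (0:ℝ) < x + n := by positivity
    have h1 : F (x+n) = G1 (x+n) + F (x+n+1) := F_rec hxn
    have h2 := G1_pos hxn
    push_cast
    have he : x + (n+1) = x + n + 1 := by ring
    rw [he]
    linarith

lemma tendsto_F_nat {x : ℝ} : Tendsto (fun n : ℕ => F (x + n)) atTop (nhds 0) :=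
  tendsto_F.comp (tendsto_atTop_add_const_left atTop x tendsto_natCast_atTop_atTop)

lemma F_nonneg {x : ℝ} (hx : 0 < x) : 0 ≤ F x :=
  le_of_tendsto' (tendsto_F_nat (x := x)) fun n => F_ge hx n

lemma F_pos {x : ℝ} (hx : 0 < x) : 0 < F x := by
  rw [F_rec hx]
  have := F_nonneg (by linarith : (0:ℝ) < x+1)
  have := G1_pos hx
  linarith

lemma F_le_final {x : ℝ} (hx : 0 < x) : F x ≤ (1/12) * (x^2)⁻¹ := by
  have h : Tendsto (fun n : ℕ => (1/12)*((x^2)⁻¹ - ((x+n)^2)⁻¹) + F (x+n)) atTop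
      (nhds ((1/12)*((x^2)⁻¹ - 0) + 0)) := by
    refine Tendsto.add (Tendsto.const_mul _ (Tendsto.const_sub _ ?_)) tendsto_F_nat
    exact (tendsto_inv_atTop_zero.comp ((tendsto_pow_atTop two_ne_zero).comp
      (tendsto_atTop_add_const_left atTop x tendsto_natCast_atTop_atTop)))
  have h' := ge_of_tendsto' h fun n => F_le hx n
  simpa using h'

/-- For every `x > 0`, `0 < x² (log x − Ψ(x) − 1/(2x)) ≤ 1/12`. -/
theorem digamma_log_bound_second_order (x : ℝ) (hx : 0 < x) :
    0 < x ^ 2 * (log x - digamma x - 1 / (2 * x)) ∧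
      x ^ 2 * (log x - digamma x - 1 / (2 * x)) ≤ 1 / 12 := by
  have hF : log x - digamma x - 1 / (2 * x) = F x := rfl
  rw [hF]
  constructor
  · exact mul_pos (by positivity) (F_pos hx)
  · have h := F_le_final hx
    have hx2 : (0:ℝ) < x^2 := by positivity
    calc x^2 * F x ≤ x^2 * ((1/12) * (x^2)⁻¹) :=
          mul_le_mul_of_nonneg_left h hx2.le
      _ = 1/12 := by
        field_simp
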